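/- arXiv:2601.21351 — 2 statements merged into one kernel-verified Lean document; each statement's English description precedes it below -/
import Mathlib

section
/- Let M > β > 0, α, B > 0, and define τ(r) = max{M, αrB + β} and h(r) = rB/((r+1)τ(r)) for r > 0. Let r_crit = (M − β)/(αB) and r_peak = √(β/(αB)). Then h attains its global maximum over (0, ∞) at r* = max{r_crit, r_peak}. -/
/-- Key monotonicity fact for the FFN-regime throughput, after clearing
denominators: `s(r+1)(ar+β) - r(s+1)(as+β) = (r-s)(ars-β)`. -/
lemma gmono_aux (a β r s : ℝ) (hkey : 0 ≤ (r - s) * (a * r * s - β)) :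
    r * ((s + 1) * (a * s + β)) ≤ s * ((r + 1) * (a * r + β)) := by
  nlinarith [hkey]

set_option maxHeartbeats 1000000 in
theorem optimal_af_ratio (M α B β : ℝ) (hβ : 0 < β) (hMβ : β < M)
    (hα : 0 < α) (hB : 0 < B) :
    let h : ℝ → ℝ := fun r => r * B / ((r + 1) * max M (α * r * B + β))
    let rcrit : ℝ := (M - β) / (α * B)
    let rpeak : ℝ := Real.sqrt (β / (α * B))
    max rcrit rpeak ∈ Set.Ioi (0 : ℝ) ∧
      IsMaxOn h (Set.Ioi (0 : ℝ)) (max rcrit rpeak) := by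
  intro h rcrit rpeak
  have hab : 0 < α * B := mul_pos hα hB
  have hM : 0 < M := lt_trans hβ hMβ
  have hrc : 0 < rcrit := div_pos (by linarith) hab
  have hrp : 0 < rpeak := Real.sqrt_pos.2 (div_pos hβ hab)
  set r0 := max rcrit rpeak with hr0def
  have hr0 : 0 < r0 := lt_of_lt_of_le hrc (le_max_left _ _)
  have hpeaksq : α * B * rpeak ^ 2 = β := by
    have h2 : rpeak ^ 2 = β / (α * B) :=
      Real.sq_sqrt (le_of_lt (div_pos hβ hab))
    rw [h2]; field_simp
  have hcrit : α * rcrit * B = M - β := by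
    show α * ((M - β) / (α * B)) * B = M - β
    field_simp
  have hrc0 : rcrit ≤ r0 := le_max_left _ _
  have hrp0 : rpeak ≤ r0 := le_max_right _ _
  have hM0 : M ≤ α * r0 * B + β := by nlinarith
  have hT0 : max M (α * r0 * B + β) = α * r0 * B + β := max_eq_right hM0
  clear_value r0
  clear_value rcrit rpeak
  refine ⟨hr0, ?_⟩
  intro r hr
  simp only [Set.mem_Ioi] at hr
  show h r ≤ h r0
  show r * B / ((r + 1) * max M (α * r * B + β)) ≤
      r0 * B / ((r0 + 1) * max M (α * r0 * B + β))
  rw [hT0]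
  have hden0 : 0 < (r0 + 1) * (α * r0 * B + β) := by positivity
  rcases le_total (α * r * B + β) M with hc | hc
  · -- Attention regime: max = M, and r ≤ rcrit
    rw [max_eq_left hc]
    have hden : 0 < (r + 1) * M := by positivity
    rw [div_le_div_iff₀ hden hden0]
    have hrle : r ≤ rcrit := le_of_mul_le_mul_right (by nlinarith) hab
    -- step 1 : r(rcrit+1) ≤ rcrit(r+1)
    have h2 : 0 ≤ rcrit * (r + 1) - r * (rcrit + 1) := by nlinarith
    -- step 2 : g(rcrit) ≤ g(r0)
    have hkey : 0 ≤ (rcrit - r0) * (α * B * rcrit * r0 - β) := by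
      rcases le_or_gt r0 rcrit with hle | hlt
      · have : r0 = rcrit := le_antisymm hle hrc0
        rw [this]; ring_nf; simp
      · have hr0p : r0 = rpeak := by
          rcases max_cases rcrit rpeak with ⟨he, _⟩ | ⟨he, _⟩
          · exfalso; rw [← hr0def] at he; linarith
          · rw [← hr0def] at he; exact he
        have h3 : rcrit < rpeak := by rw [hr0p] at hlt; exact hlt
        have h4 : α * B * rcrit * r0 < β := by
          rw [hr0p]; nlinarith
        nlinarith
    have h1s : rcrit * ((r0 + 1) * (α * B * r0 + β)) ≤
        r0 * ((rcrit + 1) * (α * B * rcrit + β)) :=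
      gmono_aux (α * B) β rcrit r0 (by nlinarith [hkey])
    have hMrw : α * B * rcrit + β = M := by nlinarith [hcrit]
    rw [hMrw] at h1s
    -- combine: rcrit * goal = r0*M*h2 + r*h1s-slack
    have pos : 0 ≤ rcrit * (r0 * ((r + 1) * M) - r * ((r0 + 1) * (α * B * r0 + β))) := by
      have hid : rcrit * (r0 * ((r + 1) * M) - r * ((r0 + 1) * (α * B * r0 + β))) =
          r0 * M * (rcrit * (r + 1) - r * (rcrit + 1)) +
          r * (r0 * ((rcrit + 1) * M) - rcrit * ((r0 + 1) * (α * B * r0 + β))) := by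
        ring
      rw [hid]
      have t1 : 0 ≤ r0 * M * (rcrit * (r + 1) - r * (rcrit + 1)) :=
        mul_nonneg (mul_pos hr0 hM).le h2
      have t2 : 0 ≤ r * (r0 * ((rcrit + 1) * M) - rcrit * ((r0 + 1) * (α * B * r0 + β))) :=
        mul_nonneg hr.le (sub_nonneg.2 h1s)
      linarith
    have h6 : 0 ≤ r0 * ((r + 1) * M) - r * ((r0 + 1) * (α * B * r0 + β)) :=
      le_of_mul_le_mul_left (by linarith) hrc
    linarith [mul_nonneg hB.le h6]
  · -- FFN regime: max = αrB+β, and r ≥ rcrit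
    rw [max_eq_right hc]
    have hden : 0 < (r + 1) * (α * r * B + β) := by
      have : 0 < α * r * B + β := by positivity
      positivity
    rw [div_le_div_iff₀ hden hden0]
    have hrge : rcrit ≤ r := le_of_mul_le_mul_right (by nlinarith) hab
    have hkey : 0 ≤ (r - r0) * (α * B * r * r0 - β) := by
      rcases le_or_gt r0 r with hle | hlt
      · have h5' : rpeak * rpeak ≤ r * r0 :=
          mul_le_mul (hrp0.trans hle) hrp0 hrp.le hr.le
        have h5 : β ≤ α * B * r * r0 := by
          nlinarith [mul_le_mul_of_nonneg_left h5' hab.le, hpeaksq]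
        nlinarith
      · have hr0p : r0 = rpeak := by
          rcases max_cases rcrit rpeak with ⟨he, _⟩ | ⟨he, _⟩
          · exfalso; rw [← hr0def] at he; linarith
          · rw [← hr0def] at he; exact he
        have h3 : r < rpeak := by rw [hr0p] at hlt; exact hlt
        have h4 : α * B * r * r0 < β := by rw [hr0p]; nlinarith
        nlinarith
    have h1s : r * ((r0 + 1) * (α * B * r0 + β)) ≤
        r0 * ((r + 1) * (α * B * r + β)) :=
      gmono_aux (α * B) β r r0 (by nlinarith [hkey])
    linarith [mul_nonneg hB.le (sub_nonneg.2 h1s)]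
end

section
/- With M > β > 0, α, B > 0, r_crit = (M−β)/(αB), r_peak = √(β/(αB)), and h(r) = rB/((r+1)·max{M, αrB+β}): if r_crit ≥ r_peak then the optimal throughput is h(r_crit) = r_crit B / ((r_crit+1) M), i.e., the optimum occurs exactly where FFN latency balances the dominant non-FFN latency. -/
theorem optimal_at_balance_point (M α B β : ℝ) (hβ : 0 < β) (hMβ : β < M)
    (hα : 0 < α) (hB : 0 < B)
    (hge : Real.sqrt (β / (α * B)) ≤ (M - β) / (α * B)) :
    let h : ℝ → ℝ := fun r => r * B / ((r + 1) * max M (α * r * B + β))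
    let rcrit : ℝ := (M - β) / (α * B)
    h rcrit = rcrit * B / ((rcrit + 1) * M) ∧
      ∀ r ∈ Set.Ioi (0 : ℝ), h r ≤ h rcrit := by
  intro h rcrit
  have hαB : 0 < α * B := mul_pos hα hB
  have hc : 0 < rcrit := div_pos (by linarith) hαB
  have hkey : α * rcrit * B + β = M := by
    simp only [rcrit]; field_simp; ring
  have hmax : max M (α * rcrit * B + β) = M := by rw [hkey, max_self]
  have hM : 0 < M := lt_trans hβ hMβ
  have hβc : β ≤ α * rcrit * rcrit * B := by
    have h0 : (0:ℝ) ≤ β / (α * B) := le_of_lt (div_pos hβ hαB)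
    have h1 : β / (α * B) ≤ rcrit * rcrit := by
      have hs := Real.sq_sqrt h0
      nlinarith [Real.sqrt_nonneg (β / (α * B)), hge]
    have : β = (β / (α * B)) * (α * B) := by field_simp
    nlinarith
  have heq : h rcrit = rcrit * B / ((rcrit + 1) * M) := by
    simp only [h, hmax]
  refine ⟨heq, ?_⟩
  intro r hr
  have hr0 : 0 < r := hr
  rw [heq]
  simp only [h]
  have hden : 0 < (rcrit + 1) * M := by positivity
  rcases le_or_gt (α * r * B + β) M with hle | hlt
  · rw [max_eq_left hle]
    have hrc : r ≤ rcrit := by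
      rw [le_div_iff₀ hαB]; nlinarith
    rw [div_le_div_iff₀ (by positivity) hden]
    nlinarith [mul_pos hB hM]
  · rw [max_eq_right hlt.le]
    have hrc : rcrit ≤ r := by
      rw [div_le_iff₀ hαB]; nlinarith
    have hkey2 : β ≤ α * rcrit * r * B := by nlinarith
    rw [div_le_div_iff₀ (by positivity) hden]
    nlinarith [mul_nonneg (mul_nonneg hB.le (sub_nonneg.2 hrc)) (sub_nonneg.2 hkey2), hkey]
end
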